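/- Let 0 < p₁ < p₂ ≤ ∞, 0 < θ₁, θ₂ ≤ ∞, let v₁, v₂ be weights on ℝⁿ, and let ω₁, ω₂ be nonnegative measurable functions on (0,∞) with 0 < ‖ω₁‖_{θ₁,(0,t)} < ∞ and 0 < ‖ω₂‖_{θ₂,(t,∞)} < ∞ for all t > 0. If there is a constant c > 0 such that ‖ ‖f‖_{p₂,v₂,B(0,t)} ‖_{θ₂,ω₂,(0,∞)} ≤ c ‖ ‖f‖_{p₁,v₁,ᶜB(0,t)} ‖_{θ₁,ω₁,(0,∞)} for all nonnegative measurable f, then for every τ > 0 the embedding L_{p₁}(v₁, B(0,τ)) ↪ L_{p₂}(v₂, B(0,τ)) holds with constant c ‖ω₁‖_{θ₁,(0,τ)} / ‖ω₂‖_{θ₂,(τ,∞)}; that is, ‖f‖_{p₂,v₂,B(0,τ)} ≤ c (‖ω₁‖_{θ₁,(0,τ)}/‖ω₂‖_{θ₂,(τ,∞)}) ‖f‖_{p₁,v₁,B(0,τ)} for all f supported in B(0,τ). -/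

import Mathlib

open MeasureTheory ENNReal Set Metric

noncomputable def Lnorm {α : Type*} [MeasurableSpace α] (p : ℝ≥0∞) (f : α → ℝ≥0∞)
    (μ : Measure α) : ℝ≥0∞ :=
  if p = ∞ then essSup f μ else (∫⁻ x, f x ^ p.toReal ∂μ) ^ (1 / p.toReal)

lemma Lnorm_mono_measure {α : Type*} [MeasurableSpace α] {p : ℝ≥0∞} {f : α → ℝ≥0∞}
    {μ ν : Measure α} (h : μ ≤ ν) : Lnorm p f μ ≤ Lnorm p f ν := by
  unfold Lnorm
  split
  · exact essSup_mono_measure' h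
  · exact ENNReal.rpow_le_rpow (lintegral_mono' h le_rfl)
      (by positivity)

lemma Lnorm_mono_ae {α : Type*} [MeasurableSpace α] {p : ℝ≥0∞} {f g : α → ℝ≥0∞}
    {μ : Measure α} (h : f ≤ᵐ[μ] g) : Lnorm p f μ ≤ Lnorm p g μ := by
  unfold Lnorm
  split
  · exact essSup_mono_ae h
  · refine ENNReal.rpow_le_rpow (lintegral_mono_ae ?_) (by positivity)
    filter_upwards [h] with x hx
    exact ENNReal.rpow_le_rpow hx toReal_nonneg

lemma Lnorm_const_mul {α : Type*} [MeasurableSpace α] {p : ℝ≥0∞} (hp : p ≠ 0)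
    {g : α → ℝ≥0∞} (hg : Measurable g) (a : ℝ≥0∞) {μ : Measure α} :
    Lnorm p (fun x => a * g x) μ = a * Lnorm p g μ := by
  unfold Lnorm
  split_ifs with h
  · exact ENNReal.essSup_const_mul
  · have hpt : 0 < p.toReal := toReal_pos hp h
    simp_rw [ENNReal.mul_rpow_of_nonneg _ _ hpt.le]
    rw [lintegral_const_mul _ (hg.pow_const _),
      ENNReal.mul_rpow_of_nonneg _ _ (by positivity : (0:ℝ) ≤ 1 / p.toReal),
      ← ENNReal.rpow_mul, mul_one_div_cancel hpt.ne', ENNReal.rpow_one]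

lemma aemeasurable_of_ae_eq_zero' {α : Type*} [MeasurableSpace α] {f : α → ℝ≥0∞}
    {μ : Measure α} (h : f =ᵐ[μ] 0) : AEMeasurable f μ :=
  ⟨0, measurable_const, h⟩

lemma Lnorm_zero_of_ae_zero {α : Type*} [MeasurableSpace α] {p : ℝ≥0∞} (hp : p ≠ 0)
    {f : α → ℝ≥0∞} {μ : Measure α} (h : f =ᵐ[μ] 0) : Lnorm p f μ = 0 := by
  unfold Lnorm
  split_ifs with hpi
  · refine le_antisymm ?_ zero_le
    refine essSup_le_of_ae_le 0 ?_
    filter_upwards [h] with x hx using le_of_eq hx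
  · have hpt : 0 < p.toReal := toReal_pos hp hpi
    have : ∫⁻ x, f x ^ p.toReal ∂μ = 0 := by
      rw [lintegral_eq_zero_iff' ]
      · filter_upwards [h] with x hx
        simp [hx, ENNReal.zero_rpow_of_pos hpt]
      · exact AEMeasurable.pow_const (aemeasurable_of_ae_eq_zero' h) _
    rw [this, ENNReal.zero_rpow_of_pos (by positivity)]

lemma Lnorm_add_measure_of_ae_zero {α : Type*} [MeasurableSpace α] {p : ℝ≥0∞} (hp : p ≠ 0)
    {f : α → ℝ≥0∞} {μ ν : Measure α} (h : f =ᵐ[ν] 0) :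
    Lnorm p f (μ + ν) = Lnorm p f μ := by
  unfold Lnorm
  split_ifs with hpi
  · refine le_antisymm ?_ (essSup_mono_measure' (Measure.le_add_right le_rfl))
    refine essSup_le_of_ae_le _ ?_
    have h1 : ∀ᵐ x ∂μ, f x ≤ essSup f μ := ENNReal.ae_le_essSup f
    have h2 : ∀ᵐ x ∂ν, f x ≤ essSup f μ := by
      filter_upwards [h] with x hx
      simp [show f x = 0 from hx]
    exact ae_add_measure_iff.2 ⟨h1, h2⟩
  · have hpt : 0 < p.toReal := toReal_pos hp hpi
    rw [lintegral_add_measure]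
    have : ∫⁻ x, f x ^ p.toReal ∂ν = 0 := by
      rw [lintegral_eq_zero_iff' (AEMeasurable.pow_const (aemeasurable_of_ae_eq_zero' h) _)]
      filter_upwards [h] with x hx
      simp [hx, ENNReal.zero_rpow_of_pos hpt]
    rw [this, add_zero]

theorem stmt4 {n : ℕ} (p₁ p₂ θ₁ θ₂ : ℝ≥0∞)
    (hp₁ : 0 < p₁) (hp₁₂ : p₁ < p₂) (hθ₁ : 0 < θ₁) (hθ₂ : 0 < θ₂)
    (v₁ v₂ : EuclideanSpace ℝ (Fin n) → ℝ≥0∞) (hv₁ : Measurable v₁) (hv₂ : Measurable v₂)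
    (hv₁pos : ∀ᵐ x ∂(volume : Measure (EuclideanSpace ℝ (Fin n))), 0 < v₁ x ∧ v₁ x < ∞)
    (hv₂pos : ∀ᵐ x ∂(volume : Measure (EuclideanSpace ℝ (Fin n))), 0 < v₂ x ∧ v₂ x < ∞)
    (ω₁ ω₂ : ℝ → ℝ≥0∞) (hω₁ : Measurable ω₁) (hω₂ : Measurable ω₂)
    (hω₁norm : ∀ t : ℝ, 0 < t →
      0 < Lnorm θ₁ ω₁ (volume.restrict (Ioo (0 : ℝ) t)) ∧
        Lnorm θ₁ ω₁ (volume.restrict (Ioo (0 : ℝ) t)) < ∞)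
    (hω₂norm : ∀ t : ℝ, 0 < t →
      0 < Lnorm θ₂ ω₂ (volume.restrict (Ioi t)) ∧ Lnorm θ₂ ω₂ (volume.restrict (Ioi t)) < ∞)
    (c : ℝ≥0∞) (hc : 0 < c)
    (hemb : ∀ f : EuclideanSpace ℝ (Fin n) → ℝ≥0∞, Measurable f →
      Lnorm θ₂
          (fun t => Lnorm p₂ (fun x => f x * v₂ x)
              (volume.restrict (ball (0 : EuclideanSpace ℝ (Fin n)) t)) * ω₂ t)
          (volume.restrict (Ioi (0 : ℝ)))
        ≤ c * Lnorm θ₁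
            (fun t => Lnorm p₁ (fun x => f x * v₁ x)
                (volume.restrict {x : EuclideanSpace ℝ (Fin n) | t ≤ ‖x‖}) * ω₁ t)
            (volume.restrict (Ioi (0 : ℝ)))) :
    ∀ τ : ℝ, 0 < τ → ∀ f : EuclideanSpace ℝ (Fin n) → ℝ≥0∞, Measurable f →
      (∀ x ∉ ball (0 : EuclideanSpace ℝ (Fin n)) τ, f x = 0) →
      Lnorm p₂ (fun x => f x * v₂ x)
          (volume.restrict (ball (0 : EuclideanSpace ℝ (Fin n)) τ))
        ≤ c * (Lnorm θ₁ ω₁ (volume.restrict (Ioo (0 : ℝ) τ))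
              / Lnorm θ₂ ω₂ (volume.restrict (Ioi τ)))
            * Lnorm p₁ (fun x => f x * v₁ x)
                (volume.restrict (ball (0 : EuclideanSpace ℝ (Fin n)) τ)) := by
  intro τ hτ f hf hsupp
  set N₁ := Lnorm p₁ (fun x => f x * v₁ x)
      (volume.restrict (ball (0 : EuclideanSpace ℝ (Fin n)) τ)) with hN₁
  set N₂ := Lnorm p₂ (fun x => f x * v₂ x)
      (volume.restrict (ball (0 : EuclideanSpace ℝ (Fin n)) τ)) with hN₂
  set W₁ := Lnorm θ₁ ω₁ (volume.restrict (Ioo (0 : ℝ) τ)) with hW₁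
  set W₂ := Lnorm θ₂ ω₂ (volume.restrict (Ioi τ)) with hW₂
  have hfv₁ : ∀ x, x ∉ ball (0 : EuclideanSpace ℝ (Fin n)) τ → f x * v₁ x = 0 := by
    intro x hx; rw [hsupp x hx, zero_mul]
  have hfv₂ : ∀ x, x ∉ ball (0 : EuclideanSpace ℝ (Fin n)) τ → f x * v₂ x = 0 := by
    intro x hx; rw [hsupp x hx, zero_mul]
  -- key step 1: lower bound the LHS of hemb
  have step1 : N₂ * W₂ ≤
      Lnorm θ₂
        (fun t => Lnorm p₂ (fun x => f x * v₂ x)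
            (volume.restrict (ball (0 : EuclideanSpace ℝ (Fin n)) t)) * ω₂ t)
        (volume.restrict (Ioi (0 : ℝ))) := by
    have h1 : N₂ * W₂ = Lnorm θ₂ (fun t => N₂ * ω₂ t) (volume.restrict (Ioi τ)) :=
      (Lnorm_const_mul hθ₂.ne' hω₂ N₂).symm
    rw [h1]
    refine le_trans (Lnorm_mono_ae ?_)
      (Lnorm_mono_measure (Measure.restrict_mono (fun t ht => lt_trans hτ ht) le_rfl))
    refine (ae_restrict_iff' measurableSet_Ioi).2 (Filter.Eventually.of_forall ?_)
    intro t ht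
    refine mul_le_mul_left ?_ _
    exact Lnorm_mono_measure (Measure.restrict_mono (ball_subset_ball (le_of_lt ht)) le_rfl)
  -- key step 2: upper bound the RHS of hemb
  have step2 :
      Lnorm θ₁
        (fun t => Lnorm p₁ (fun x => f x * v₁ x)
            (volume.restrict {x : EuclideanSpace ℝ (Fin n) | t ≤ ‖x‖}) * ω₁ t)
        (volume.restrict (Ioi (0 : ℝ)))
        ≤ N₁ * W₁ := by
    set G := fun t : ℝ => Lnorm p₁ (fun x => f x * v₁ x)
        (volume.restrict {x : EuclideanSpace ℝ (Fin n) | t ≤ ‖x‖}) * ω₁ t with hG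
    have hGzero : ∀ t : ℝ, τ ≤ t → G t = 0 := by
      intro t ht
      have : Lnorm p₁ (fun x => f x * v₁ x)
          (volume.restrict {x : EuclideanSpace ℝ (Fin n) | t ≤ ‖x‖}) = 0 := by
        refine Lnorm_zero_of_ae_zero hp₁.ne' ?_
        refine (ae_restrict_iff' ?_).2 (Filter.Eventually.of_forall ?_)
        · exact measurableSet_le measurable_const measurable_norm
        · intro x hx
          refine hfv₁ x ?_
          simp only [mem_ball, dist_zero_right, not_lt]
          exact le_trans ht hx
      simp [hG, this]
    -- split the measure
    have hsplit : (volume.restrict (Ioi (0:ℝ))) =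
        volume.restrict (Ioo (0:ℝ) τ) + volume.restrict (Ici τ) := by
      rw [← Measure.restrict_union
        (Set.disjoint_left.2 (fun t ht₁ ht₂ => absurd (ht₂.trans_lt ht₁.2) (lt_irrefl τ)))
        measurableSet_Ici, Ioo_union_Ici_eq_Ioi hτ]
    rw [hsplit, Lnorm_add_measure_of_ae_zero hθ₁.ne'
      ((ae_restrict_iff' measurableSet_Ici).2 (Filter.Eventually.of_forall
        (fun t ht => hGzero t ht)))]
    have hbound : ∀ t : ℝ, G t ≤ N₁ * ω₁ t := by
      intro t
      refine mul_le_mul_left ?_ _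
      have heq : Lnorm p₁ (fun x => f x * v₁ x)
          (volume.restrict (ball (0 : EuclideanSpace ℝ (Fin n)) τ)
            + volume.restrict (ball (0 : EuclideanSpace ℝ (Fin n)) τ)ᶜ) = N₁ := by
        refine Lnorm_add_measure_of_ae_zero hp₁.ne' ?_
        refine (ae_restrict_iff' measurableSet_ball.compl).2 (Filter.Eventually.of_forall ?_)
        intro x hx
        exact hfv₁ x hx
      rw [Measure.restrict_add_restrict_compl measurableSet_ball] at heq
      rw [← heq]
      exact Lnorm_mono_measure Measure.restrict_le_self
    calc Lnorm θ₁ G (volume.restrict (Ioo (0:ℝ) τ))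
        ≤ Lnorm θ₁ (fun t => N₁ * ω₁ t) (volume.restrict (Ioo (0:ℝ) τ)) :=
          Lnorm_mono_ae (Filter.Eventually.of_forall hbound)
      _ = N₁ * W₁ := Lnorm_const_mul hθ₁.ne' hω₁ N₁
  have key : N₂ * W₂ ≤ c * (N₁ * W₁) :=
    le_trans step1 (le_trans (hemb f hf) (mul_le_mul_right step2 c))
  obtain ⟨hW₂pos, hW₂fin⟩ := hω₂norm τ hτ
  rw [← hW₂] at hW₂pos hW₂fin
  have hN₂ : N₂ = N₂ * W₂ / W₂ := by
    rw [mul_div_assoc, ENNReal.div_self hW₂pos.ne' hW₂fin.ne, mul_one]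
  rw [hN₂]
  refine le_trans (ENNReal.div_le_div_right key W₂) ?_
  rw [div_eq_mul_inv, ENNReal.div_eq_inv_mul]
  ring_nf
  exact le_rfl
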